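/- Injectivity of the power-of-two literal mapping with alternating signs: the map sending, for i < n, the positive literal x_i to 4^i and the negative literal ¬x_i to −2·4^i assigns distinct sums to distinct sets of literals, i.e., for any two distinct functions f, g : Fin n → Option Bool (where none = literal absent, some true = positive, some false = negative), the total mapped sums differ. -/
import Mathlib


/-- Value of a (possibly absent) literal at position `i`: a positive literal
maps to `4^i` and a negative literal to `-2 * 4^i`. -/
def literalVal (i : ℕ) : Option Bool → ℤ
  | none => 0
  | some true => 4 ^ i
  | some false => -2 * 4 ^ i

lemma literalVal_diff_abs_le (i : ℕ) (a b : Option Bool) :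
    |literalVal i a - literalVal i b| ≤ 3 * 4 ^ i := by
  have h : (0:ℤ) < 4 ^ i := by positivity
  rcases a with _ | (_ | _) <;> rcases b with _ | (_ | _) <;>
    simp [literalVal] <;> rw [abs_le] <;> constructor <;> linarith

lemma literalVal_diff_abs_ge (i : ℕ) (a b : Option Bool) (h : a ≠ b) :
    4 ^ i ≤ |literalVal i a - literalVal i b| := by
  have h4 : (0:ℤ) < 4 ^ i := by positivity
  rcases a with _ | (_ | _) <;> rcases b with _ | (_ | _) <;>
    simp_all [literalVal] <;> rw [le_abs] <;>
    first
      | (left; nlinarith [pow_pos (show (0:ℤ) < 4 by norm_num) i])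
      | (right; nlinarith [pow_pos (show (0:ℤ) < 4 by norm_num) i])

lemma sum_three_pow (n : ℕ) : (∑ i : Fin n, 3 * (4:ℤ) ^ (i:ℕ)) = 4 ^ n - 1 := by
  induction n with
  | zero => simp
  | succ n ih => rw [Fin.sum_univ_castSucc]; simp [ih]; ring

/-- The alternating-sign power-of-two literal mapping assigns distinct total
sums to distinct sets of literals. -/
theorem literal_mapping_injective (n : ℕ) (f g : Fin n → Option Bool)
    (hfg : f ≠ g) :
    (∑ i : Fin n, literalVal i (f i)) ≠ (∑ i : Fin n, literalVal i (g i)) := by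
  induction n with
  | zero => exact absurd (funext fun i => i.elim0) hfg
  | succ n ih =>
    intro hsum
    have hsum' : (∑ i : Fin (n+1), (literalVal i (f i) - literalVal i (g i))) = 0 := by
      rw [Finset.sum_sub_distrib, hsum, sub_self]
    rw [Fin.sum_univ_castSucc] at hsum'
    by_cases hlast : f (Fin.last n) = g (Fin.last n)
    · have htail : (fun i : Fin n => f i.castSucc) ≠ (fun i : Fin n => g i.castSucc) := by
        intro h
        apply hfg
        funext i
        exact Fin.lastCases hlast (fun j => congrFun h j) i
      apply ih _ _ htail
      have : (∑ i : Fin n, (literalVal i.castSucc (f i.castSucc)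
          - literalVal i.castSucc (g i.castSucc))) = 0 := by
        rw [hlast] at hsum'; linarith
      have h2 : (∑ i : Fin n, (literalVal i (f i.castSucc) - literalVal i (g i.castSucc))) = 0 := by
        simpa using this
      rw [Finset.sum_sub_distrib] at h2
      linarith
    · have hb : |∑ i : Fin n, (literalVal i.castSucc (f i.castSucc)
          - literalVal i.castSucc (g i.castSucc))| ≤ 4 ^ n - 1 := by
        calc _ ≤ ∑ i : Fin n, |literalVal i.castSucc (f i.castSucc)
            - literalVal i.castSucc (g i.castSucc)| := Finset.abs_sum_le_sum_abs _ _
        _ ≤ ∑ i : Fin n, 3 * (4:ℤ) ^ (i:ℕ) := by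
            apply Finset.sum_le_sum
            intro i _
            simpa using literalVal_diff_abs_le i (f i.castSucc) (g i.castSucc)
        _ = 4 ^ n - 1 := sum_three_pow n
      have hg : (4:ℤ) ^ n ≤ |literalVal (Fin.last n) (f (Fin.last n))
          - literalVal (Fin.last n) (g (Fin.last n))| := by
        simpa using literalVal_diff_abs_ge n (f (Fin.last n)) (g (Fin.last n)) hlast
      have hL : literalVal (Fin.last n) (f (Fin.last n))
          - literalVal (Fin.last n) (g (Fin.last n))
          = -(∑ i : Fin n, (literalVal i.castSucc (f i.castSucc)
            - literalVal i.castSucc (g i.castSucc))) := by linarith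
      rw [hL, abs_neg] at hg
      linarith
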